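/- Let n ≥ 1 be an integer and define g_n : (−1, 1) → ℝ by g_n(x) = ( 1/2 − x^{2n}/(2(n+1)) ) / (x^{2n} − 1)². Then g_n is strictly convex on the open interval (−1, 1). (Note that for x ≠ 0, g_n(x) = −Ṽ_n(x)/(Ṽ_n'(x))², where Ṽ_n(x) = −x²/2 + x^{2n+2}/(2(n+1)) is the φ^{2n+2} potential and Ṽ_n'(x) = x(x^{2n} − 1); g_n is the smooth extension of this quotient through x = 0.) -/

import Mathlib

open Set

/-- Composition of a strictly convex function with a convex strictly monotone function,
no injectivity needed. -/
lemma comp_strictConvexOn' {f g : ℝ → ℝ} {s t : Set ℝ} (hmap : Set.MapsTo f s t)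
    (hg : ConvexOn ℝ t g) (hgm : StrictMonoOn g t) (hf : StrictConvexOn ℝ s f) :
    StrictConvexOn ℝ s (g ∘ f) := by
  refine ⟨hf.1, fun x hx y hy hxy a b ha hb hab => ?_⟩
  have hmem : a • x + b • y ∈ s := hf.1 hx hy ha.le hb.le hab
  have h1 : f (a • x + b • y) < a • f x + b • f y := hf.2 hx hy hxy ha hb hab
  have h2 : a • f x + b • f y ∈ t := hg.1 (hmap hx) (hmap hy) ha.le hb.le hab
  calc g (f (a • x + b • y)) < g (a • f x + b • f y) := hgm (hmap hmem) h2 h1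
    _ ≤ a • g (f x) + b • g (f y) := hg.2 (hmap hx) (hmap hy) ha.le hb.le hab

theorem stmt19 (n : ℕ) (hn : 1 ≤ n) :
    StrictConvexOn ℝ (Set.Ioo (-1 : ℝ) 1)
      (fun x : ℝ => (1 / 2 - x ^ (2 * n) / (2 * ((n : ℝ) + 1))) / (x ^ (2 * n) - 1) ^ 2) := by
  have hn1 : (0 : ℝ) < (n : ℝ) + 1 := by positivity
  set φ : ℝ → ℝ := fun t => (1 / 2 - t / (2 * ((n : ℝ) + 1))) / (t - 1) ^ 2 with hφ
  set ψ : ℝ → ℝ := fun t => (t - (2 * n + 1)) / (2 * ((n : ℝ) + 1) * (t - 1) ^ 3) with hψ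
  -- first derivative of φ
  have hA : ∀ t : ℝ, t < 1 → HasDerivAt φ (ψ t) t := by
    intro t ht
    have ht1 : t - 1 ≠ 0 := sub_ne_zero.mpr (ne_of_lt ht)
    have hN : HasDerivAt (fun t : ℝ => 1 / 2 - t / (2 * ((n : ℝ) + 1)))
        (-(1 / (2 * ((n : ℝ) + 1)))) t :=
      ((hasDerivAt_id t).div_const (2 * ((n : ℝ) + 1))).const_sub (1 / 2)
    have hD : HasDerivAt (fun t : ℝ => (t - 1) ^ 2) (2 * (t - 1)) t := by
      have := ((hasDerivAt_id t).sub_const 1).fun_pow 2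
      simpa using this
    have := hN.fun_div hD (pow_ne_zero 2 ht1)
    refine this.congr_deriv ?_
    rw [hψ]
    field_simp
    ring
  -- second derivative of φ
  have hB : ∀ t : ℝ, t < 1 →
      HasDerivAt ψ ((3 * n + 1 - t) / (((n : ℝ) + 1) * (t - 1) ^ 4)) t := by
    intro t ht
    have ht1 : t - 1 ≠ 0 := sub_ne_zero.mpr (ne_of_lt ht)
    have hN : HasDerivAt (fun t : ℝ => t - (2 * (n : ℝ) + 1)) 1 t :=
      (hasDerivAt_id t).sub_const _
    have hD : HasDerivAt (fun t : ℝ => 2 * ((n : ℝ) + 1) * (t - 1) ^ 3)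
        (2 * ((n : ℝ) + 1) * (3 * (t - 1) ^ 2)) t := by
      have := (((hasDerivAt_id t).sub_const 1).pow 3).const_mul (2 * ((n : ℝ) + 1))
      simpa using this
    have hDne : 2 * ((n : ℝ) + 1) * (t - 1) ^ 3 ≠ 0 := by positivity
    have := hN.fun_div hD hDne
    refine this.congr_deriv ?_
    field_simp
    ring
  have hcont : ContinuousOn φ (Iio (1 : ℝ)) := by
    apply ContinuousOn.div (by fun_prop) (by fun_prop)
    intro t ht
    exact pow_ne_zero 2 (sub_ne_zero.mpr (ne_of_lt ht))
  -- φ is strictly monotone on Iio 1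
  have hmono : StrictMonoOn φ (Iio (1 : ℝ)) := by
    apply strictMonoOn_of_deriv_pos (convex_Iio 1) hcont
    intro t ht
    rw [interior_Iio] at ht
    have ht' : t < 1 := ht
    rw [(hA t ht).deriv, hψ]
    have hnum : t - (2 * (n : ℝ) + 1) < 0 := by
      have : (1 : ℝ) ≤ 2 * (n : ℝ) + 1 := by
        have : (1 : ℝ) ≤ (n : ℝ) := by exact_mod_cast hn
        nlinarith
      linarith
    have hden : 2 * ((n : ℝ) + 1) * (t - 1) ^ 3 < 0 := by
      have h3 : (t - 1) ^ 3 < 0 := Odd.pow_neg (by decide) (by linarith : t - 1 < 0)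
      nlinarith
    exact div_pos_of_neg_of_neg hnum hden
  -- φ is strictly convex on Iio 1
  have hconv : StrictConvexOn ℝ (Iio (1 : ℝ)) φ := by
    apply strictConvexOn_of_deriv2_pos (convex_Iio 1) hcont
    intro t ht
    rw [interior_Iio] at ht
    have heq : deriv (deriv φ) t = (3 * n + 1 - t) / (((n : ℝ) + 1) * (t - 1) ^ 4) := by
      have hev : deriv φ =ᶠ[nhds t] ψ := by
        filter_upwards [Iio_mem_nhds ht] with u hu
        exact (hA u hu).deriv
      rw [hev.deriv_eq, (hB t ht).deriv]
    simp only [Function.iterate_succ, Function.iterate_zero, Function.comp_apply, id]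
    rw [heq]
    have ht' : t < 1 := ht
    have ht1 : t - 1 ≠ 0 := sub_ne_zero.mpr (ne_of_lt ht)
    have hnum : (0 : ℝ) < 3 * n + 1 - t := by
      have : (1 : ℝ) ≤ (n : ℝ) := by exact_mod_cast hn
      nlinarith
    positivity
  -- inner function
  have hinner : StrictConvexOn ℝ (Set.Ioo (-1 : ℝ) 1) (fun x : ℝ => x ^ (2 * n)) :=
    (Even.strictConvexOn_pow (even_two_mul n) (by omega)).subset (subset_univ _)
      (convex_Ioo _ _)
  have hmap : Set.MapsTo (fun x : ℝ => x ^ (2 * n)) (Set.Ioo (-1 : ℝ) 1) (Iio (1 : ℝ)) := by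
    intro x hx
    have habs : |x| < 1 := abs_lt.mpr ⟨hx.1, hx.2⟩
    have : x ^ (2 * n) ≤ |x| ^ (2 * n) := by
      rw [← abs_pow]; exact le_abs_self _
    have h2 : |x| ^ (2 * n) < 1 := pow_lt_one₀ (abs_nonneg x) habs (by omega)
    exact lt_of_le_of_lt this h2
  exact comp_strictConvexOn' hmap hconv.convexOn hmono hinner
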